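/- Normalization does not increase DAG-size: for every term t, |sub_dag(⌈t⌉)| ≤ |sub_dag(t)|. -/

import Mathlib

inductive BinOp : Type
  | enc | aenc | pair | sig
deriving DecidableEq

inductive Term : Type
  | atom : ℕ → Term
  | var  : ℕ → Term
  | bin  : BinOp → Term → Term → Term
  | priv : Term → Term
  | aci  : List Term → Term

def Term.subst (σ : ℕ → Term) : Term → Term
  | .atom a => .atom a
  | .var x => σ x
  | .bin o p q => .bin o (p.subst σ) (q.subst σ)
  | .priv t => .priv (t.subst σ)
  | .aci L => .aci (L.attach.map fun p => p.1.subst σ)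
decreasing_by
  all_goals simp_wf
  all_goals first
    | omega
    | (have := List.sizeOf_lt_of_mem p.2; omega)

def Term.elems : Term → Set Term
  | .aci L => ⋃ p ∈ L.attach, p.1.elems
  | t => {t}
decreasing_by
  have := List.sizeOf_lt_of_mem p.2; simp_wf; omega

def Term.subDag : Term → Set Term
  | .atom a => {.atom a}
  | .var x => {.var x}
  | .bin o p q => insert (.bin o p q) (p.subDag ∪ q.subDag)
  | .priv t => insert (.priv t) t.subDag
  | .aci L => insert (.aci L) (⋃ p ∈ L.attach, p.1.subDag)
decreasing_by
  all_goals simp_wf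
  all_goals first
    | omega
    | (have := List.sizeOf_lt_of_mem p.2; omega)

def Term.vars (t : Term) : Set ℕ := {x | Term.var x ∈ t.subDag}

def Term.Ground (t : Term) : Prop := t.vars = ∅

/-- Specification of the quasi-subterm function `sub`. -/
structure SubSpec where
  sub : Term → Set Term
  sub_atom : ∀ a, sub (.atom a) = {.atom a}
  sub_var : ∀ x, sub (.var x) = {.var x}
  sub_priv : ∀ t, sub (.priv t) = insert (.priv t) (sub t)
  sub_bin : ∀ o p q, sub (.bin o p q) = insert (.bin o p q) (sub p ∪ sub q)
  sub_aci : ∀ L, sub (.aci L) = insert (.aci L) (⋃ p ∈ (Term.aci L).elems, sub p)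

/-- Specification of the ACI normal form with respect to a strict total order `lt`. -/
structure NormSpec (lt : Term → Term → Prop) where
  nf : Term → Term
  nf_atom : ∀ a, nf (.atom a) = .atom a
  nf_var  : ∀ x, nf (.var x) = .var x
  nf_bin  : ∀ o p q, nf (.bin o p q) = .bin o (nf p) (nf q)
  nf_priv : ∀ t, nf (.priv t) = .priv (nf t)
  nf_aci_single : ∀ L t', nf '' (Term.aci L).elems = {t'} → nf (.aci L) = t'
  nf_aci : ∀ L, (¬ ∃ t', nf '' (Term.aci L).elems = {t'}) →
      ∃ L' : List Term, List.Pairwise lt L' ∧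
        (∀ s, s ∈ L' ↔ s ∈ nf '' (Term.aci L).elems) ∧ nf (.aci L) = .aci L'

/-- The derivable closure of a set `E` of terms under a deduction system `R`,
given as a set of rules (premises, conclusion): the least superset of `E`
closed under the rules. -/
inductive Der (R : Set (Set Term × Term)) (E : Set Term) : Term → Prop where
  | base {t : Term} : t ∈ E → Der R E t
  | step {l : Set Term} {r : Term} : (l, r) ∈ R → (∀ s ∈ l, Der R E s) → Der R E r

/-- The composition rules of the DY+ACI deduction system (for normal form `nf`). -/
inductive DYComp (nf : Term → Term) : Set Term → Term → Prop where
  | enc  (t₁ t₂ : Term) : DYComp nf {t₁, t₂} (nf (.bin .enc t₁ t₂))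
  | aenc (t₁ t₂ : Term) : DYComp nf {t₁, t₂} (nf (.bin .aenc t₁ t₂))
  | pair (t₁ t₂ : Term) : DYComp nf {t₁, t₂} (nf (.bin .pair t₁ t₂))
  | sig  (t₁ t₂ : Term) : DYComp nf {t₁, .priv t₂} (nf (.bin .sig t₁ (.priv t₂)))
  | aci  (L : List Term) (h : L ≠ []) : DYComp nf {t | t ∈ L} (nf (.aci L))

/-- The composition rules of DY+ACI other than the ACI-set construction rule. -/
inductive DYCompNoACI (nf : Term → Term) : Set Term → Term → Prop where
  | enc  (t₁ t₂ : Term) : DYCompNoACI nf {t₁, t₂} (nf (.bin .enc t₁ t₂))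
  | aenc (t₁ t₂ : Term) : DYCompNoACI nf {t₁, t₂} (nf (.bin .aenc t₁ t₂))
  | pair (t₁ t₂ : Term) : DYCompNoACI nf {t₁, t₂} (nf (.bin .pair t₁ t₂))
  | sig  (t₁ t₂ : Term) : DYCompNoACI nf {t₁, .priv t₂} (nf (.bin .sig t₁ (.priv t₂)))

/-- The decomposition rules of the DY+ACI deduction system. -/
inductive DYDecomp (nf : Term → Term) : Set Term → Term → Prop where
  | enc  (t₁ t₂ : Term) : DYDecomp nf {.bin .enc t₁ t₂, nf t₂} (nf t₁)
  | aenc (t₁ t₂ : Term) : DYDecomp nf {.bin .aenc t₁ t₂, nf (.priv t₂)} (nf t₁)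
  | fst  (t₁ t₂ : Term) : DYDecomp nf {.bin .pair t₁ t₂} (nf t₁)
  | snd  (t₁ t₂ : Term) : DYDecomp nf {.bin .pair t₁ t₂} (nf t₂)
  | aci  (L : List Term) (t : Term) (h : t ∈ L) : DYDecomp nf {.aci L} (nf t)

/-- The DY+ACI deduction system as a set of rules. -/
def DYACI (nf : Term → Term) : Set (Set Term × Term) :=
  {p | DYComp nf p.1 p.2 ∨ DYDecomp nf p.1 p.2}

/-- A ground substitution `σ` is a model of a constraint system
`S = {Eᵢ ▷ tᵢ}` if `⌈tᵢσ⌉` is derivable from `⌈Eᵢσ⌉` in DY+ACI. -/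
def Models (nf : Term → Term) (σ : ℕ → Term) (S : List (Set Term × Term)) : Prop :=
  ∀ c ∈ S, Der (DYACI nf) (nf '' ((fun t => t.subst σ) '' c.1)) (nf (c.2.subst σ))

/-- All terms occurring in a constraint system. -/
def termsOf (S : List (Set Term × Term)) : Set Term :=
  ⋃ c ∈ S, c.1 ∪ {c.2}

/-- DAG-subterms of a constraint system. -/
def subDagS (S : List (Set Term × Term)) : Set Term :=
  ⋃ t ∈ termsOf S, t.subDag

/-- Variables of a constraint system. -/
def varsS (S : List (Set Term × Term)) : Set ℕ :=
  {x | Term.var x ∈ subDagS S}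

/-- Applying a substitution to a constraint system. -/
def substS (θ : ℕ → Term) (S : List (Set Term × Term)) : List (Set Term × Term) :=
  S.map fun c => ((fun t => t.subst θ) '' c.1, c.2.subst θ)

/-- The domain of a substitution. -/
def dom (θ : ℕ → Term) : Set ℕ := {x | θ x ≠ .var x}

lemma mem_subDag_self (t : Term) : t ∈ t.subDag := by
  cases t <;> simp [Term.subDag]

lemma subDag_mono_aci {L : List Term} {p : Term} (hp : p ∈ L) :
    p.subDag ⊆ (Term.aci L).subDag := by
  intro s hs
  rw [Term.subDag]
  simp only [Set.mem_insert_iff, Set.mem_iUnion, List.mem_attach, exists_true_left]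
  exact Or.inr ⟨⟨p, hp⟩, hs⟩

lemma mem_elems_aci {L : List Term} {s : Term} :
    s ∈ (Term.aci L).elems ↔ ∃ p ∈ L, s ∈ p.elems := by
  rw [Term.elems]
  simp
lemma elems_nonaci : ∀ (t : Term), (∀ L, t ≠ Term.aci L) → t.elems = {t}
  | .atom a, _ => by rw [Term.elems] <;> simp
  | .var x, _ => by rw [Term.elems] <;> simp
  | .bin o p q, _ => by rw [Term.elems] <;> simp
  | .priv u, _ => by rw [Term.elems] <;> simp
  | .aci L, h => absurd rfl (h L)

lemma elems_spec : ∀ n (t : Term), sizeOf t ≤ n → ∀ s ∈ t.elems,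
    s.subDag ⊆ t.subDag ∧ sizeOf s ≤ sizeOf t := by
  intro n
  induction n with
  | zero => intro t ht; cases t <;> simp at ht
  | succ n ih =>
    intro t ht s hs
    match t with
    | .aci L =>
      rw [mem_elems_aci] at hs
      obtain ⟨p, hp, hsp⟩ := hs
      have hps := List.sizeOf_lt_of_mem hp
      have : sizeOf (Term.aci L) = 1 + sizeOf L := by simp
      have hpn : sizeOf p ≤ n := by omega
      obtain ⟨h1, h2⟩ := ih p hpn s hsp
      exact ⟨h1.trans (subDag_mono_aci hp), by omega⟩
    | .atom a => rw [elems_nonaci _ (by intro L h; cases h)] at hs; simp at hs; subst hs; exact ⟨le_refl _, le_refl _⟩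
    | .var x => rw [elems_nonaci _ (by intro L h; cases h)] at hs; simp at hs; subst hs; exact ⟨le_refl _, le_refl _⟩
    | .bin o p q => rw [elems_nonaci _ (by intro L h; cases h)] at hs; simp at hs; subst hs; exact ⟨le_refl _, le_refl _⟩
    | .priv u => rw [elems_nonaci _ (by intro L h; cases h)] at hs; simp at hs; subst hs; exact ⟨le_refl _, le_refl _⟩
lemma subDag_finite : ∀ n (t : Term), sizeOf t ≤ n → t.subDag.Finite := by
  intro n
  induction n with
  | zero => intro t ht; cases t <;> simp at ht
  | succ n ih =>
    intro t ht
    match t with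
    | .atom a => rw [Term.subDag]; exact Set.finite_singleton _
    | .var x => rw [Term.subDag]; exact Set.finite_singleton _
    | .bin o p q =>
      rw [Term.subDag]
      have hsz : sizeOf (Term.bin o p q) = 1 + sizeOf o + sizeOf p + sizeOf q := by simp
      exact ((ih p (by omega)).union (ih q (by omega))).insert _
    | .priv u =>
      rw [Term.subDag]
      have hsz : sizeOf (Term.priv u) = 1 + sizeOf u := by simp
      exact (ih u (by omega)).insert _
    | .aci L =>
      rw [Term.subDag]
      have hsz : sizeOf (Term.aci L) = 1 + sizeOf L := by simp
      refine ((Set.Finite.biUnion ?_ ?_)).insert _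
      · exact L.attach.finite_toSet
      · rintro ⟨p, hp⟩ -
        have := List.sizeOf_lt_of_mem hp
        exact ih p (by omega)

lemma nf_subDag_sub {lt : Term → Term → Prop} (N : NormSpec lt) :
    ∀ n (t : Term), sizeOf t ≤ n → (N.nf t).subDag ⊆ N.nf '' t.subDag := by
  intro n
  induction n with
  | zero => intro t ht; cases t <;> simp at ht
  | succ n ih =>
    intro t ht
    match t with
    | .atom a =>
      rw [N.nf_atom, Term.subDag]
      exact Set.singleton_subset_iff.2 ⟨_, rfl, N.nf_atom a⟩
    | .var x =>
      rw [N.nf_var, Term.subDag]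
      exact Set.singleton_subset_iff.2 ⟨_, rfl, N.nf_var x⟩
    | .bin o p q =>
      have hsz : sizeOf (Term.bin o p q) = 1 + sizeOf o + sizeOf p + sizeOf q := by simp
      rw [N.nf_bin]
      rw [Term.subDag]
      intro s hs
      rcases hs with hs | hs | hs
      · exact ⟨_, mem_subDag_self _, by rw [N.nf_bin, hs]⟩
      · obtain ⟨u, hu, hus⟩ := ih p (by omega) hs
        exact ⟨u, by rw [Term.subDag]; exact Set.mem_insert_iff.2 (Or.inr (Or.inl hu)), hus⟩
      · obtain ⟨u, hu, hus⟩ := ih q (by omega) hs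
        exact ⟨u, by rw [Term.subDag]; exact Set.mem_insert_iff.2 (Or.inr (Or.inr hu)), hus⟩
    | .priv u =>
      have hsz : sizeOf (Term.priv u) = 1 + sizeOf u := by simp
      rw [N.nf_priv, Term.subDag]
      intro s hs
      rcases hs with hs | hs
      · exact ⟨_, mem_subDag_self _, by rw [N.nf_priv, hs]⟩
      · obtain ⟨w, hw, hws⟩ := ih u (by omega) hs
        exact ⟨w, by rw [Term.subDag]; exact Set.mem_insert_iff.2 (Or.inr hw), hws⟩
    | .aci L =>
      have hsz : sizeOf (Term.aci L) = 1 + sizeOf L := by simp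
      by_cases hsing : ∃ t', N.nf '' (Term.aci L).elems = {t'}
      · obtain ⟨t', ht'⟩ := hsing
        rw [N.nf_aci_single L t' ht']
        have : t' ∈ N.nf '' (Term.aci L).elems := by rw [ht']; rfl
        obtain ⟨s, hs, hst⟩ := this
        obtain ⟨hsub, hle⟩ := elems_spec _ (Term.aci L) (le_refl _) s hs
        rw [mem_elems_aci] at hs
        obtain ⟨p, hp, hsp⟩ := hs
        have hps := List.sizeOf_lt_of_mem hp
        have hle2 := (elems_spec _ p (le_refl _) s hsp).2
        rw [← hst]
        exact (ih s (by omega)).trans (Set.image_mono hsub)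
      · obtain ⟨L', _, hmem, heq⟩ := N.nf_aci L hsing
        rw [heq, Term.subDag]
        intro s hs
        rcases hs with hs | hs
        · exact ⟨_, mem_subDag_self _, by rw [heq, hs]⟩
        · simp only [Set.mem_iUnion, List.mem_attach, exists_true_left] at hs
          obtain ⟨⟨p, hp⟩, hsp⟩ := hs
          have hp' := (hmem p).1 hp
          obtain ⟨u, hu, hup⟩ := hp'
          obtain ⟨hsub, hle⟩ := elems_spec _ (Term.aci L) (le_refl _) u hu
          rw [mem_elems_aci] at hu
          obtain ⟨w, hw, huw⟩ := hu
          have hws := List.sizeOf_lt_of_mem hw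
          have hle2 := (elems_spec _ w (le_refl _) u huw).2
          have hsp2 : s ∈ p.subDag := hsp
          rw [← hup] at hsp2
          obtain ⟨v, hv, hvs⟩ := ih u (by omega) hsp2
          exact ⟨v, hsub hv, hvs⟩

/-- Normalization does not increase DAG-size. -/
theorem norm_dagsize_le (lt : Term → Term → Prop) (hlt : IsStrictTotalOrder Term lt)
    (N : NormSpec lt) : ∀ t : Term, ((N.nf t).subDag).ncard ≤ (t.subDag).ncard := by
  intro t
  have hfin := subDag_finite _ t (le_refl _)
  calc ((N.nf t).subDag).ncard ≤ (N.nf '' t.subDag).ncard :=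
        Set.ncard_le_ncard (nf_subDag_sub N _ t (le_refl _)) (hfin.image _)
    _ ≤ (t.subDag).ncard := Set.ncard_image_le hfin
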